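/- arXiv:1807.08137 — 2 statements merged into one kernel-verified Lean document; each statement's English description precedes it below -/
import Mathlib

section
/- For the normalized pendulum system ẋ₁ = x₂, ẋ₂ = -sin(x₁) - x₂, the function v(x₁,x₂) = 40.6843·x₁x₂ + 35.6870·x₁² + 84.3906·x₂² satisfies v(x) > 0 and ∇v(x)·f(x) < 0 for all x with 0.1 ≤ ‖x‖ ≤ 1.0, where ∇v·f = (2·35.6870·x₁ + 40.6843·x₂)·x₂ + (40.6843·x₁ + 2·84.3906·x₂)·(-sin(x₁) - x₂). -/
/-- The synthesized function `v(x) = 40.6843·x₁x₂ + 35.6870·x₁² + 84.3906·x₂²` is a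
Lyapunov function for the normalized pendulum `ẋ₁ = x₂, ẋ₂ = -sin x₁ - x₂` on the
annulus `0.1 ≤ ‖x‖ ≤ 1`. -/
theorem pendulum_lyapunov (x₁ x₂ : ℝ)
    (h₁ : (0.01 : ℝ) ≤ x₁ ^ 2 + x₂ ^ 2) (h₂ : x₁ ^ 2 + x₂ ^ 2 ≤ 1) :
    (40.6843 * (x₁ * x₂) + 35.6870 * x₁ ^ 2 + 84.3906 * x₂ ^ 2 > 0) ∧
    ((2 * 35.6870 * x₁ + 40.6843 * x₂) * x₂ +
      (40.6843 * x₁ + 2 * 84.3906 * x₂) * (-Real.sin x₁ - x₂) < 0) := by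
  have hx1 : |x₁| ≤ 1 := by
    rw [abs_le]
    constructor <;> nlinarith [sq_nonneg x₂, sq_nonneg (x₁ + 1), sq_nonneg (x₁ - 1)]
  have hb : |Real.sin x₁ - (x₁ - x₁ ^ 3 / 6)| ≤ |x₁| ^ 4 * (5 / 96) :=
    (Real.sin_bound hx1).trans (by
      have h4 := pow_nonneg (abs_nonneg x₁) 4
      rw [pow_succ]; nlinarith)
  rw [abs_le] at hb
  obtain ⟨hb1, hb2⟩ := hb
  have hx4 : |x₁| ^ 4 = x₁ ^ 4 := by rw [← abs_pow, abs_of_nonneg (by positivity)]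
  rw [hx4] at hb1 hb2
  have hc1 : 40.6843 * x₁ + 168.7812 * x₂ ≤ 210 := by
    nlinarith [sq_nonneg (x₁ - 1), sq_nonneg (x₂ - 1), sq_nonneg x₁, sq_nonneg x₂]
  have hc2 : -210 ≤ 40.6843 * x₁ + 168.7812 * x₂ := by
    nlinarith [sq_nonneg (x₁ + 1), sq_nonneg (x₂ + 1), sq_nonneg x₁, sq_nonneg x₂]
  have hce : (40.6843 * x₁ + 168.7812 * x₂) * (Real.sin x₁ - (x₁ - x₁ ^ 3 / 6)) ≥
      -(210 * (x₁ ^ 4 * (5 / 96))) := by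
    nlinarith [mul_nonneg (by linarith : (0:ℝ) ≤ 210 - (40.6843 * x₁ + 168.7812 * x₂))
        (by linarith : (0:ℝ) ≤ x₁ ^ 4 * (5 / 96) - (Real.sin x₁ - (x₁ - x₁ ^ 3 / 6))),
      mul_nonneg (by linarith : (0:ℝ) ≤ 210 + (40.6843 * x₁ + 168.7812 * x₂))
        (by linarith : (0:ℝ) ≤ x₁ ^ 4 * (5 / 96) + (Real.sin x₁ - (x₁ - x₁ ^ 3 / 6)))]
  constructor
  · nlinarith [sq_nonneg (x₁ + x₂), sq_nonneg (x₁ - x₂), sq_nonneg x₁, sq_nonneg x₂]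
  · nlinarith [hce,
      mul_nonneg (by linarith : (0:ℝ) ≤ 1 - (x₁ ^ 2 + x₂ ^ 2))
        (sq_nonneg (x₁ + 1.2764 * x₂)),
      mul_nonneg (by linarith : (0:ℝ) ≤ 1 - (x₁ ^ 2 + x₂ ^ 2)) (sq_nonneg x₂),
      sq_nonneg (x₁ + 2.3 * x₂), sq_nonneg x₂,
      sq_nonneg (x₁ ^ 2 + 2.653 * (x₁ * x₂) + 0.9418 * x₂ ^ 2),
      sq_nonneg (x₁ * x₂ + 1.1031 * x₂ ^ 2), sq_nonneg (x₂ ^ 2)]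
end

section
/- For the damped Mathieu system ẋ₁ = x₂, ẋ₂ = -x₂ - (2 + sin t)·x₁, the function V(x₁,x₂) = 54.6950·x₁x₂ + 90.2849·x₁² + 50.5376·x₂² satisfies V(x) > 0 and (2·90.2849·x₁ + 54.6950·x₂)·x₂ + (54.6950·x₁ + 2·50.5376·x₂)·(-x₂ - (2+sin t)·x₁) < 0 for all x with 0.01 ≤ x₁² + x₂² ≤ 1 and all t ∈ [0.1, 1]. -/
/-- The synthesized function `V(x) = 54.6950·x₁x₂ + 90.2849·x₁² + 50.5376·x₂²` is a
Lyapunov function for the damped Mathieu system `ẋ₁ = x₂, ẋ₂ = -x₂ - (2 + sin t)·x₁`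
on the annulus `0.01 ≤ x₁² + x₂² ≤ 1`, uniformly over `t ∈ [0.1, 1]`. -/
theorem mathieu_lyapunov (x₁ x₂ t : ℝ)
    (h₁ : (0.01 : ℝ) ≤ x₁ ^ 2 + x₂ ^ 2) (h₂ : x₁ ^ 2 + x₂ ^ 2 ≤ 1)
    (ht₁ : (0.1 : ℝ) ≤ t) (ht₂ : t ≤ 1) :
    (54.6950 * (x₁ * x₂) + 90.2849 * x₁ ^ 2 + 50.5376 * x₂ ^ 2 > 0) ∧
    ((2 * 90.2849 * x₁ + 54.6950 * x₂) * x₂ +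
      (54.6950 * x₁ + 2 * 50.5376 * x₂) * (-x₂ - (2 + Real.sin t) * x₁) < 0) := by
  have ht0 : (0:ℝ) ≤ t := by linarith
  have hs0 : 0 ≤ Real.sin t := Real.sin_nonneg_of_nonneg_of_le_pi ht0
    (by linarith [Real.pi_gt_three])
  have hcos : 1 - t ^ 2 / 2 ≤ Real.cos t := Real.one_sub_sq_div_two_le_cos
  have hcos2 : (1:ℝ)/2 ≤ Real.cos t := by nlinarith
  have hsq : Real.sin t ^ 2 + Real.cos t ^ 2 = 1 := Real.sin_sq_add_cos_sq t
  have hs1 : Real.sin t ≤ 0.867 := by nlinarith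
  constructor
  · nlinarith [sq_nonneg (x₁ + x₂), sq_nonneg (x₁ - x₂), sq_nonneg x₁, sq_nonneg x₂]
  · have hs1' : (0:ℝ) ≤ 0.867 - Real.sin t := by linarith
    nlinarith [mul_nonneg hs1' (sq_nonneg (x₁ + 0.3524 * x₂)),
      mul_nonneg hs1' (sq_nonneg (x₁ - 0.3524 * x₂)),
      mul_nonneg hs0 (sq_nonneg (x₁ + 0.527 * x₂)),
      mul_nonneg hs0 (sq_nonneg (x₁ - 0.527 * x₂)),
      mul_nonneg hs1' (sq_nonneg x₂), mul_nonneg hs0 (sq_nonneg x₂),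
      mul_nonneg hs0 (sq_nonneg x₁), sq_nonneg x₁, sq_nonneg x₂]
end
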